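/- Let A and B be N×N complex matrices (representing bipartite pure states |Ψ⟩ = Σ_{i,j} a_{ij}|i⟩⊗|j⟩ and |Φ⟩ = Σ_{i,j} b_{ij}|i⟩⊗|j⟩). Then there exist N×N unitary matrices U and V with B = U·A·Vᵀ (i.e., the two pure states are equivalent under local unitary transformations) if and only if Tr((A·A†)^α) = Tr((B·B†)^α) for all α = 1, …, N. -/

import Mathlib

open Matrix Finset


lemma aux_esymm_eq {n : ℕ} (f g : Fin n → ℝ)
    (h : ∀ k : ℕ, 1 ≤ k → k ≤ n → ∑ i, f i ^ k = ∑ i, g i ^ k) :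
    ∀ k : ℕ, k ≤ n →
      MvPolynomial.aeval f (MvPolynomial.esymm (Fin n) ℝ k)
        = MvPolynomial.aeval g (MvPolynomial.esymm (Fin n) ℝ k) := by
  intro k
  induction k using Nat.strong_induction_on with
  | _ k ih =>
    intro hkn
    rcases Nat.eq_zero_or_pos k with hk0 | hk1
    · subst hk0; simp [MvPolynomial.esymm_zero]
    · have key := congrArg (MvPolynomial.aeval f) (MvPolynomial.mul_esymm_eq_sum (Fin n) ℝ k)
      have key' := congrArg (MvPolynomial.aeval g) (MvPolynomial.mul_esymm_eq_sum (Fin n) ℝ k)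
      simp only [_root_.map_mul, map_natCast, map_sum, map_pow, map_neg, _root_.map_one] at key key'
      have hsum : ∀ x : Fin n → ℝ, (∀ k' : ℕ, 1 ≤ k' → k' ≤ n →
          MvPolynomial.aeval x (MvPolynomial.psum (Fin n) ℝ k') = ∑ i, x i ^ k') := by
        intro x k' _ _
        simp [MvPolynomial.psum, map_sum, map_pow]
      have hS : ∑ a ∈ Finset.HasAntidiagonal.antidiagonal k with a.1 < k,
            (-1:ℝ) ^ a.1 * MvPolynomial.aeval f (MvPolynomial.esymm (Fin n) ℝ a.1) *
              MvPolynomial.aeval f (MvPolynomial.psum (Fin n) ℝ a.2)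
          = ∑ a ∈ Finset.HasAntidiagonal.antidiagonal k with a.1 < k,
            (-1:ℝ) ^ a.1 * MvPolynomial.aeval g (MvPolynomial.esymm (Fin n) ℝ a.1) *
              MvPolynomial.aeval g (MvPolynomial.psum (Fin n) ℝ a.2) := by
        apply Finset.sum_congr rfl
        intro a ha
        rw [Finset.mem_filter, Finset.HasAntidiagonal.mem_antidiagonal] at ha
        obtain ⟨hak, halt⟩ := ha
        have h2 : 1 ≤ a.2 := by omega
        have h2' : a.2 ≤ n := by omega
        rw [ih a.1 halt (by omega), hsum f a.2 h2 h2', hsum g a.2 h2 h2', h a.2 h2 h2']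
      rw [hS] at key
      have : (k : ℝ) * MvPolynomial.aeval f (MvPolynomial.esymm (Fin n) ℝ k)
          = (k : ℝ) * MvPolynomial.aeval g (MvPolynomial.esymm (Fin n) ℝ k) := by
        rw [key, key']
      exact mul_left_cancel₀ (Nat.cast_ne_zero.mpr (by omega)) this


lemma aux_multiset_eq {n : ℕ} (f g : Fin n → ℝ)
    (hesymm : ∀ k : ℕ, k ≤ n →
      (Multiset.map f Finset.univ.val).esymm k = (Multiset.map g Finset.univ.val).esymm k) :
    Multiset.map f Finset.univ.val = Multiset.map g Finset.univ.val := by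
  set s := Multiset.map f Finset.univ.val with hs
  set t := Multiset.map g Finset.univ.val with ht
  have hcs : Multiset.card s = n := by simp [hs]
  have hct : Multiset.card t = n := by simp [ht]
  have hprod : (s.map fun r => Polynomial.X - Polynomial.C r).prod
      = (t.map fun r => Polynomial.X - Polynomial.C r).prod := by
    rw [Multiset.prod_X_sub_X_eq_sum_esymm, Multiset.prod_X_sub_X_eq_sum_esymm, hcs, hct]
    apply Finset.sum_congr rfl
    intro j hj
    rw [Finset.mem_range] at hj
    rw [hesymm j (by omega)]
  calc s = (s.map fun r => Polynomial.X - Polynomial.C r).prod.roots := by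
            rw [Polynomial.roots_multiset_prod_X_sub_C]
    _ = (t.map fun r => Polynomial.X - Polynomial.C r).prod.roots := by rw [hprod]
    _ = t := by rw [Polynomial.roots_multiset_prod_X_sub_C]

lemma aux_perm {n : ℕ} (f g : Fin n → ℝ)
    (h : Multiset.map f Finset.univ.val = Multiset.map g Finset.univ.val) :
    ∃ σ : Equiv.Perm (Fin n), f ∘ σ = g := by
  have e : ∀ (h : Fin n → ℝ) (σ : Equiv.Perm (Fin n)),
      (↑(List.ofFn (h ∘ σ)) : Multiset ℝ) = Multiset.map h Finset.univ.val := by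
    intro h σ
    have h1 : (↑(List.finRange n) : Multiset (Fin n)) = Finset.univ.val := by
      simp [Fin.univ_def]
    have h2 : Multiset.map (⇑σ) Finset.univ.val = Finset.univ.val :=
      congrArg Finset.val (Finset.map_univ_equiv σ)
    rw [List.ofFn_eq_map, ← Multiset.map_coe, h1]
    conv_rhs => rw [← h2]
    rw [Multiset.map_map]
  have hlist : (List.ofFn (f ∘ Tuple.sort f)).Perm (List.ofFn (g ∘ Tuple.sort g)) := by
    rw [← Multiset.coe_eq_coe, e f, e g, h]
  have hsorted : List.ofFn (f ∘ Tuple.sort f) = List.ofFn (g ∘ Tuple.sort g) :=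
    List.Perm.eq_of_sortedLE (List.sortedLE_ofFn_iff.mpr (Tuple.monotone_sort f))
      (List.sortedLE_ofFn_iff.mpr (Tuple.monotone_sort g)) hlist
  have hfun : f ∘ Tuple.sort f = g ∘ Tuple.sort g := List.ofFn_injective hsorted
  refine ⟨((Tuple.sort g).symm).trans (Tuple.sort f), ?_⟩
  funext i
  have := congrFun hfun ((Tuple.sort g).symm i)
  simpa using this


lemma aux_conj_pow {N : ℕ} (U M : Matrix (Fin N) (Fin N) ℂ) (hU : star U * U = 1) (k : ℕ) :
    (U * M * star U) ^ k * U = U * M ^ k := by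
  induction k with
  | zero => simp
  | succ k ih =>
    rw [pow_succ, pow_succ, show (U * M * star U) ^ k * (U * M * star U) * U
      = (U * M * star U) ^ k * U * M * (star U * U) by simp only [mul_assoc], hU, mul_one, ih, mul_assoc]

lemma aux_trace_conj_pow {N : ℕ} (U M : Matrix (Fin N) (Fin N) ℂ)
    (hU : star U * U = 1) (hU' : U * star U = 1) (k : ℕ) :
    ((U * M * star U) ^ k).trace = (M ^ k).trace := by
  have h : (U * M * star U) ^ k = U * M ^ k * star U := by
    have := aux_conj_pow U M hU k
    calc (U * M * star U) ^ k = (U * M * star U) ^ k * (U * star U) := by rw [hU', mul_one]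
      _ = (U * M * star U) ^ k * U * star U := by simp only [mul_assoc]
      _ = U * M ^ k * star U := by rw [this]
  rw [h, Matrix.trace_mul_cycle, hU, one_mul]

lemma aux_trace_pow {N : ℕ} (A : Matrix (Fin N) (Fin N) ℂ) (k : ℕ) :
    ((A * Aᴴ) ^ k).trace
      = ∑ i, ((Matrix.isHermitian_mul_conjTranspose_self A).eigenvalues i : ℂ) ^ k := by
  set hA := Matrix.isHermitian_mul_conjTranspose_self A
  have hU := Matrix.mem_unitaryGroup_iff'.mp hA.eigenvectorUnitary.2
  have hU' := Matrix.mem_unitaryGroup_iff.mp hA.eigenvectorUnitary.2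
  calc ((A * Aᴴ) ^ k).trace
      = (((hA.eigenvectorUnitary : Matrix (Fin N) (Fin N) ℂ) *
          diagonal (RCLike.ofReal ∘ hA.eigenvalues) *
          star (hA.eigenvectorUnitary : Matrix (Fin N) (Fin N) ℂ)) ^ k).trace := by
        rw [← Unitary.conjStarAlgAut_apply (S := ℂ), ← hA.spectral_theorem]
    _ = ((diagonal (RCLike.ofReal ∘ hA.eigenvalues)) ^ k).trace :=
        aux_trace_conj_pow _ _ hU hU' k
    _ = ∑ i, ((hA.eigenvalues i : ℂ)) ^ k := by
        rw [Matrix.diagonal_pow, Matrix.trace_diagonal]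
        simp


lemma aux_svd {N : ℕ} (A : Matrix (Fin N) (Fin N) ℂ) :
    ∃ U W : Matrix (Fin N) (Fin N) ℂ, U ∈ Matrix.unitaryGroup (Fin N) ℂ ∧
      W ∈ Matrix.unitaryGroup (Fin N) ℂ ∧
      A = U * Matrix.diagonal (fun i => (Real.sqrt
        ((Matrix.isHermitian_mul_conjTranspose_self A).eigenvalues i) : ℂ)) * W := by
  classical
  set hA := Matrix.isHermitian_mul_conjTranspose_self A with hhA
  set eig := hA.eigenvalues with heig
  set U₀ : Matrix (Fin N) (Fin N) ℂ := (hA.eigenvectorUnitary : Matrix (Fin N) (Fin N) ℂ)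
    with hU₀
  have hU₀mem : U₀ ∈ Matrix.unitaryGroup (Fin N) ℂ := hA.eigenvectorUnitary.2
  have hU₀1 : star U₀ * U₀ = 1 := Matrix.mem_unitaryGroup_iff'.mp hU₀mem
  have hU₀1' : U₀ * star U₀ = 1 := Matrix.mem_unitaryGroup_iff.mp hU₀mem
  set C : Matrix (Fin N) (Fin N) ℂ := star U₀ * A with hC
  have hCC : C * Cᴴ = Matrix.diagonal (fun i => (eig i : ℂ)) := by
    have h1 : C * Cᴴ = star U₀ * (A * Aᴴ) * U₀ := by
      rw [hC, Matrix.conjTranspose_mul, Matrix.star_eq_conjTranspose,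
        Matrix.conjTranspose_conjTranspose]
      simp only [Matrix.star_eq_conjTranspose, mul_assoc]
    rw [h1]
    have := Matrix.IsHermitian.conjStarAlgAut_star_eigenvectorUnitary hA
    rw [Unitary.conjStarAlgAut_apply, Unitary.coe_star, star_star] at this
    rw [← hU₀] at this
    rw [this]
    rfl
  have heignn : ∀ i, 0 ≤ eig i := fun i =>
    Matrix.eigenvalues_self_mul_conjTranspose_nonneg A i
  set c : Fin N → ℂ := fun i => (Real.sqrt (eig i) : ℂ) with hc
  -- rows of C as Euclidean vectors, normalized
  set v : Fin N → EuclideanSpace ℂ (Fin N) :=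
    fun i => (WithLp.equiv 2 (Fin N → ℂ)).symm (fun j => (c i)⁻¹ * C i j) with hv
  set s : Set (Fin N) := {i | eig i ≠ 0} with hs
  have hcc : ∀ i j, ∑ k, (starRingEnd ℂ) (C i k) * C j k = if j = i then (eig i : ℂ) else 0 := by
    intro i j
    have : (C * Cᴴ) j i = Matrix.diagonal (fun i => (eig i : ℂ)) j i := by rw [hCC]
    rw [Matrix.mul_apply] at this
    simp only [Matrix.conjTranspose_apply, Matrix.diagonal_apply] at this
    calc ∑ k, (starRingEnd ℂ) (C i k) * C j k = ∑ k, C j k * star (C i k) := by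
          apply Finset.sum_congr rfl; intro k _; rw [mul_comm]; rfl
      _ = if j = i then (eig j : ℂ) else 0 := by rw [this]
      _ = if j = i then (eig i : ℂ) else 0 := by split <;> simp_all
  have horth : Orthonormal ℂ (s.restrict v) := by
    rw [orthonormal_iff_ite]
    rintro ⟨i, hi⟩ ⟨j, hj⟩
    rw [PiLp.inner_apply]
    dsimp only [Set.domRestrict, Set.restrict]
    simp only [hv, WithLp.equiv_symm_apply, WithLp.ofLp_toLp, PiLp.toLp_apply, RCLike.inner_apply']
    have : ∀ k : Fin N, (starRingEnd ℂ) ((c i)⁻¹ * C i k) * ((c j)⁻¹ * C j k)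
        = (c i)⁻¹ * (c j)⁻¹ * ((starRingEnd ℂ) (C i k) * C j k) := by
      intro k
      have : (starRingEnd ℂ) ((c i)⁻¹) = (c i)⁻¹ := by
        rw [hc]; simp [← Complex.ofReal_inv]
      rw [_root_.map_mul, this]; ring
    simp only [this, ← Finset.mul_sum, hcc i j]
    by_cases hij : (⟨i, hi⟩ : s) = ⟨j, hj⟩
    · have hij' : i = j := by injection hij
      subst hij'
      simp only [if_pos rfl, hij, if_pos]
      have h0 : (0:ℝ) < eig i := lt_of_le_of_ne (heignn i) (Ne.symm hi)
      rw [hc]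
      rw [← Complex.ofReal_inv, ← Complex.ofReal_mul, ← Complex.ofReal_mul]
      norm_cast
      rw [← Real.sqrt_inv, ← Real.sqrt_mul_self (le_of_lt (inv_pos.mpr h0))]
      field_simp
      rw [Real.sq_sqrt (by positivity), one_div, Real.sqrt_inv, Real.sqrt_sq h0.le, mul_inv_cancel₀ h0.ne']
    · have hij' : j ≠ i := fun h => hij (by simp [h.symm])
      rw [if_neg hij', if_neg hij]
      ring
  obtain ⟨b, hb⟩ := horth.exists_orthonormalBasis_extension_of_card_eq
    (by simp [finrank_euclideanSpace])
  set W : Matrix (Fin N) (Fin N) ℂ := Matrix.of (fun i j => b i j) with hW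
  have hWmem : W ∈ Matrix.unitaryGroup (Fin N) ℂ := by
    rw [Matrix.mem_unitaryGroup_iff]
    ext i j
    rw [Matrix.mul_apply, Matrix.one_apply]
    have := orthonormal_iff_ite.mp b.orthonormal j i
    rw [PiLp.inner_apply] at this
    simp only [RCLike.inner_apply] at this
    calc ∑ k, W i k * (star W) k j = ∑ k, (starRingEnd ℂ) (b j k) * b i k := by
          apply Finset.sum_congr rfl; intro k _
          simp only [hW, Matrix.star_eq_conjTranspose, Matrix.conjTranspose_apply, Matrix.of_apply]
          ring_nf
          rfl
      _ = if j = i then 1 else 0 := (Finset.sum_congr rfl fun k _ => mul_comm _ _).trans this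
      _ = if i = j then 1 else 0 := by simp [eq_comm]
  have hDW : Matrix.diagonal c * W = C := by
    ext i j
    rw [Matrix.diagonal_mul]
    by_cases hi : eig i = 0
    · have hci : c i = 0 := by rw [hc]; simp [hi]
      rw [hci, zero_mul]
      -- C i j = 0 since row norm is eig i = 0
      have hrow := hcc i i
      rw [if_pos rfl, hi] at hrow
      have hterm : ∀ k, (starRingEnd ℂ) (C i k) * C i k = (Complex.normSq (C i k) : ℂ) := by
        intro k; rw [mul_comm, Complex.mul_conj]
      rw [Finset.sum_congr rfl (fun k _ => hterm k)] at hrow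
      have hsum0 : ∑ k, Complex.normSq (C i k) = 0 := by exact_mod_cast hrow
      have hzero : Complex.normSq (C i j) = 0 :=
        (Finset.sum_eq_zero_iff_of_nonneg (fun k _ => Complex.normSq_nonneg _)).mp hsum0 j
          (Finset.mem_univ j)
      exact (Complex.normSq_eq_zero.mp hzero).symm
    · have hiS : i ∈ s := hi
      have hWij : W i j = (c i)⁻¹ * C i j := by
        rw [hW]
        simp only [Matrix.of_apply]
        rw [hb i hiS, hv]
        rfl
      have hcine : c i ≠ 0 := by
        rw [hc]
        simp only [ne_eq, Complex.ofReal_eq_zero]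
        exact Real.sqrt_ne_zero'.mpr (lt_of_le_of_ne (heignn i) (Ne.symm hi))
      rw [hWij, ← mul_assoc, mul_inv_cancel₀ hcine, one_mul]
  refine ⟨U₀, W, hU₀mem, hWmem, ?_⟩
  rw [mul_assoc, hDW, hC, ← mul_assoc, hU₀1', one_mul]


lemma aux_transpose_mem {N : ℕ} {M : Matrix (Fin N) (Fin N) ℂ}
    (h : M ∈ Matrix.unitaryGroup (Fin N) ℂ) : Mᵀ ∈ Matrix.unitaryGroup (Fin N) ℂ := by
  have h' : M * Mᴴ = 1 := by
    rw [← Matrix.star_eq_conjTranspose]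
    exact Matrix.mem_unitaryGroup_iff.mp h
  rw [Matrix.mem_unitaryGroup_iff']
  calc star Mᵀ * Mᵀ = (Mᴴ)ᵀ * Mᵀ := by
        congr 1
    _ = (M * Mᴴ)ᵀ := by rw [Matrix.transpose_mul]
    _ = 1 := by rw [h', Matrix.transpose_one]

lemma aux_permMatrix {N : ℕ} (σ : Equiv.Perm (Fin N)) (d : Fin N → ℂ) :
    ∃ P : Matrix (Fin N) (Fin N) ℂ, P ∈ Matrix.unitaryGroup (Fin N) ℂ ∧
      Matrix.diagonal (fun i => d (σ i)) = P * Matrix.diagonal d * star P := by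
  classical
  set P : Matrix (Fin N) (Fin N) ℂ := Matrix.of (fun i j => if σ i = j then 1 else 0) with hP
  have hPs : ∀ i j, (star P) i j = if σ j = i then 1 else 0 := by
    intro i j
    simp only [Matrix.star_eq_conjTranspose, Matrix.conjTranspose_apply, hP, Matrix.of_apply]
    split <;> simp
  refine ⟨P, ?_, ?_⟩
  · rw [Matrix.mem_unitaryGroup_iff]
    ext i j
    rw [Matrix.mul_apply, Matrix.one_apply]
    simp only [hP, Matrix.of_apply, hPs, ite_mul, one_mul, zero_mul, mul_ite, mul_one, mul_zero]
    simp [Finset.sum_ite_eq, Equiv.apply_eq_iff_eq, eq_comm]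
  · ext i j
    rw [Matrix.mul_apply, Matrix.diagonal_apply]
    have hPD : ∀ i k, (P * Matrix.diagonal d) i k = if σ i = k then d k else 0 := by
      intro i k
      rw [Matrix.mul_apply]
      simp only [hP, Matrix.of_apply, Matrix.diagonal_apply, ite_mul, one_mul, zero_mul,
        mul_ite, mul_one, mul_zero]
      simp [Finset.sum_ite_eq']
    simp only [hPD, hPs, ite_mul, zero_mul, mul_ite, mul_one, mul_zero]
    rw [Finset.sum_ite_eq Finset.univ (σ j) (fun k => if σ i = k then d k else 0)]
    simp only [Finset.mem_univ, if_true]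
    by_cases hij : i = j
    · subst hij; simp
    · rw [if_neg hij, if_neg (fun h => hij (σ.injective h))]


/-- Two bipartite pure states on `ℂᴺ ⊗ ℂᴺ` with coefficient matrices `A` and `B`
are equivalent under local unitary transformations (`B = U·A·Vᵀ` for unitaries
`U`, `V`) if and only if `Tr((AA†)^α) = Tr((BB†)^α)` for all `α = 1, …, N`. -/
theorem pure_LU_iff_trace_invariants (N : ℕ) (A B : Matrix (Fin N) (Fin N) ℂ) :
    (∃ U V : Matrix (Fin N) (Fin N) ℂ,
        U ∈ Matrix.unitaryGroup (Fin N) ℂ ∧ V ∈ Matrix.unitaryGroup (Fin N) ℂ ∧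
        B = U * A * Vᵀ) ↔
      ∀ α : ℕ, 1 ≤ α → α ≤ N → ((A * Aᴴ) ^ α).trace = ((B * Bᴴ) ^ α).trace := by
  constructor
  · rintro ⟨U, V, hU, hV, hB⟩ α _ _
    have hVt : Vᵀ * (Vᵀ)ᴴ = 1 := by
      rw [← Matrix.star_eq_conjTranspose]
      exact Matrix.mem_unitaryGroup_iff.mp (aux_transpose_mem hV)
    have hBB : B * Bᴴ = U * (A * Aᴴ) * star U := by
      rw [hB, Matrix.conjTranspose_mul, Matrix.conjTranspose_mul, Matrix.star_eq_conjTranspose]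
      calc U * A * Vᵀ * (Vᵀᴴ * (Aᴴ * Uᴴ)) = U * A * (Vᵀ * Vᵀᴴ) * (Aᴴ * Uᴴ) := by
            simp only [mul_assoc]
        _ = U * A * (Aᴴ * Uᴴ) := by rw [hVt, mul_one]
        _ = U * (A * Aᴴ) * Uᴴ := by simp only [mul_assoc]
    rw [hBB, aux_trace_conj_pow U (A * Aᴴ) (Matrix.mem_unitaryGroup_iff'.mp hU)
      (Matrix.mem_unitaryGroup_iff.mp hU) α]
  · intro h
    have hR : ∀ k : ℕ, 1 ≤ k → k ≤ N →
        ∑ i, (Matrix.isHermitian_mul_conjTranspose_self A).eigenvalues i ^ k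
          = ∑ i, (Matrix.isHermitian_mul_conjTranspose_self B).eigenvalues i ^ k := by
      intro k hk1 hk2
      have := h k hk1 hk2
      rw [aux_trace_pow A k, aux_trace_pow B k] at this
      exact_mod_cast this
    have hesymm : ∀ k : ℕ, k ≤ N →
        (Multiset.map (Matrix.isHermitian_mul_conjTranspose_self A).eigenvalues
          Finset.univ.val).esymm k
          = (Multiset.map (Matrix.isHermitian_mul_conjTranspose_self B).eigenvalues
          Finset.univ.val).esymm k := by
      intro k hk
      rw [← MvPolynomial.aeval_esymm_eq_multiset_esymm (Fin N) (R := ℝ) k,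
        ← MvPolynomial.aeval_esymm_eq_multiset_esymm (Fin N) (R := ℝ) k]
      exact aux_esymm_eq _ _ hR k hk
    obtain ⟨σ, hσ⟩ := aux_perm _ _ (aux_multiset_eq _ _ hesymm)
    obtain ⟨U₁, W₁, hU₁, hW₁, hsvdA⟩ := aux_svd A
    obtain ⟨U₂, W₂, hU₂, hW₂, hsvdB⟩ := aux_svd B
    obtain ⟨P, hP, hPdiag⟩ := aux_permMatrix σ (fun i => (Real.sqrt
      ((Matrix.isHermitian_mul_conjTranspose_self A).eigenvalues i) : ℂ))
    have hDB : Matrix.diagonal (fun i => (Real.sqrt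
          ((Matrix.isHermitian_mul_conjTranspose_self B).eigenvalues i) : ℂ))
        = P * Matrix.diagonal (fun i => (Real.sqrt
          ((Matrix.isHermitian_mul_conjTranspose_self A).eigenvalues i) : ℂ)) * star P := by
      rw [← hPdiag]
      exact congrArg Matrix.diagonal (funext fun i =>
        congrArg (fun r : ℝ => ((Real.sqrt r : ℝ) : ℂ)) (congrFun hσ i).symm)
    have hDA : star U₁ * A * star W₁
        = Matrix.diagonal (fun i => (Real.sqrt
          ((Matrix.isHermitian_mul_conjTranspose_self A).eigenvalues i) : ℂ)) := by
      nth_rw 1 [hsvdA]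
      calc star U₁ * (U₁ * Matrix.diagonal (fun i => (Real.sqrt
            ((Matrix.isHermitian_mul_conjTranspose_self A).eigenvalues i) : ℂ)) * W₁) * star W₁
          = (star U₁ * U₁) * Matrix.diagonal (fun i => (Real.sqrt
            ((Matrix.isHermitian_mul_conjTranspose_self A).eigenvalues i) : ℂ))
            * (W₁ * star W₁) := by simp only [mul_assoc]
        _ = Matrix.diagonal (fun i => (Real.sqrt
            ((Matrix.isHermitian_mul_conjTranspose_self A).eigenvalues i) : ℂ)) := by
            rw [Matrix.mem_unitaryGroup_iff'.mp hU₁, Matrix.mem_unitaryGroup_iff.mp hW₁,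
              one_mul, mul_one]
    refine ⟨U₂ * P * star U₁, (star W₁ * star P * W₂)ᵀ, ?_, ?_, ?_⟩
    · exact mul_mem (mul_mem hU₂ hP) (Unitary.star_mem hU₁)
    · exact aux_transpose_mem (mul_mem (mul_mem (Unitary.star_mem hW₁) (Unitary.star_mem hP)) hW₂)
    · rw [Matrix.transpose_transpose, hsvdB, hDB, ← hDA]
      simp only [mul_assoc]
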